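/- Every nonzero matrix g ∈ M(2,ℚ) admits a factorization g = r · e · s_q · f where r ∈ ℚ, r > 0, e, f ∈ SL(2,ℤ), q ∈ ℤ, and s_q = [[1,0],[0,q]]. Moreover r and q are uniquely determined by g. -/

import Mathlib

abbrev SL2 := Matrix.SpecialLinearGroup (Fin 2) ℤ

lemma matext (M : Matrix (Fin 2) (Fin 2) ℤ) : M = !![M 0 0, M 0 1; M 1 0, M 1 1] := by
  ext i j; fin_cases i <;> fin_cases j <;> simp

lemma colred (M : Matrix (Fin 2) (Fin 2) ℤ) :
    ∃ e : SL2, (e.1 * M) 0 0 = (Int.gcd (M 0 0) (M 1 0) : ℤ) ∧ (e.1 * M) 1 0 = 0 := by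
  set x := M 0 0
  set y := M 1 0
  by_cases h : x = 0 ∧ y = 0
  · refine ⟨1, ?_, ?_⟩ <;> simp only [Matrix.SpecialLinearGroup.coe_one, one_mul]
    · show x = (Int.gcd x y : ℤ)
      rw [h.1, h.2]; simp
    · exact h.2
  · have hg : Int.gcd x y ≠ 0 := by
      simpa [Int.gcd_eq_zero_iff] using h
    set g : ℤ := (Int.gcd x y : ℤ) with hgdef
    have hgz : g ≠ 0 := by simpa [hgdef] using hg
    obtain ⟨x', hx'⟩ : g ∣ x := Int.gcd_dvd_left _ _
    obtain ⟨y', hy'⟩ : g ∣ y := Int.gcd_dvd_right _ _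
    set u := Int.gcdA x y
    set v := Int.gcdB x y
    have hbez : g = x * u + y * v := Int.gcd_eq_gcd_ab x y
    have hbez' : x' * u + y' * v = 1 := by
      have : g * (x' * u + y' * v) = g * 1 := by
        rw [mul_one]; nth_rewrite 2 [hbez]; rw [hx', hy']; ring
      exact mul_left_cancel₀ hgz this
    refine ⟨⟨!![u, v; -y', x'], by
      simp [Matrix.det_fin_two_of]; linarith [hbez']⟩, ?_, ?_⟩
    · simp only [Matrix.mul_apply, Fin.sum_univ_two, Matrix.cons_val_zero,
        Matrix.cons_val_one, Matrix.head_cons, Matrix.cons_val', Matrix.head_fin_const,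
        Matrix.of_apply, Matrix.empty_val', Matrix.cons_val_fin_one]
      show u * x + v * y = g
      linarith [hbez]
    · simp only [Matrix.mul_apply, Fin.sum_univ_two, Matrix.cons_val_zero,
        Matrix.cons_val_one, Matrix.head_cons, Matrix.cons_val', Matrix.head_fin_const,
        Matrix.of_apply, Matrix.empty_val', Matrix.cons_val_fin_one]
      show -y' * x + x' * y = 0
      rw [hx', hy']; ring

/-- the standard column-swap element of SL2 -/
def Ssl : SL2 := ⟨!![0, -1; 1, 0], by simp [Matrix.det_fin_two_of]⟩

lemma snf_aux : ∀ n : ℕ, ∀ M : Matrix (Fin 2) (Fin 2) ℤ, Int.gcd (M 0 0) (M 1 0) < n →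
    ∃ (e f : SL2) (a b : ℤ), 0 ≤ a ∧ a ∣ b ∧ M = e.1 * !![a, 0; 0, b] * f.1 := by
  intro n
  induction n with
  | zero => intro M h; omega
  | succ n ih =>
    intro M hM
    obtain ⟨e₁, h00, h10⟩ := colred M
    set T := e₁.1 * M with hTdef
    have hMT : M = (e₁⁻¹).1 * T := by
      rw [hTdef, ← Matrix.mul_assoc, ← Matrix.SpecialLinearGroup.coe_mul, inv_mul_cancel,
        Matrix.SpecialLinearGroup.coe_one, Matrix.one_mul]
    set G : ℕ := Int.gcd (M 0 0) (M 1 0) with hGdef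
    set g : ℤ := (G : ℤ) with hgdef
    set b := T 0 1 with hbdef
    set d := T 1 1 with hddef
    have hT : T = !![g, b; 0, d] := by
      rw [matext T, h00, h10]
    by_cases hG0 : G = 0
    · -- first column of M (hence of T) is zero
      have hg0 : g = 0 := by rw [hgdef, hG0]; rfl
      -- T * S = !![b, 0; d, 0]
      have hTS : T * Ssl.1 = !![b, 0; d, 0] := by
        rw [hT, hg0]
        show _ * !![0,-1;1,0] = _
        rw [Matrix.mul_fin_two]
        norm_num
      obtain ⟨e₂, k00, k10⟩ := colred (T * Ssl.1)
      set K := e₂.1 * (T * Ssl.1) with hKdef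
      have hcol2 : ∀ i : Fin 2, K i 1 = 0 := by
        intro i
        rw [hKdef, hTS, Matrix.mul_apply, Fin.sum_univ_two]
        simp
      have hK : K = !![(Int.gcd b d : ℤ), 0; 0, 0] := by
        rw [matext K, k00, k10, hcol2 0, hcol2 1, hTS]
        norm_num
      refine ⟨e₁⁻¹ * e₂⁻¹, Ssl⁻¹, (Int.gcd b d : ℤ), 0, Int.natCast_nonneg _, dvd_zero _, ?_⟩
      have hTK : T = e₂⁻¹.1 * K * Ssl⁻¹.1 := by
        rw [hKdef]
        rw [← Matrix.mul_assoc, ← Matrix.SpecialLinearGroup.coe_mul, inv_mul_cancel,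
          Matrix.SpecialLinearGroup.coe_one, Matrix.one_mul, Matrix.mul_assoc,
          ← Matrix.SpecialLinearGroup.coe_mul, mul_inv_cancel,
          Matrix.SpecialLinearGroup.coe_one, Matrix.mul_one]
      rw [hMT, hTK, hK]
      simp only [Matrix.SpecialLinearGroup.coe_mul]
      noncomm_ring
    · have hgpos : 0 < g := by
        rw [hgdef]; exact_mod_cast Nat.pos_of_ne_zero hG0
      by_cases hb : g ∣ b
      · have e01 : g * (b / g) = b := Int.mul_ediv_cancel' hb
        by_cases hd : g ∣ d
        · refine ⟨e₁⁻¹, ⟨!![1, b / g; 0, 1], by simp [Matrix.det_fin_two_of]⟩, g, d,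
            le_of_lt hgpos, hd, ?_⟩
          have step : !![g, b; 0, d] = !![g, 0; 0, d] * !![1, b / g; 0, 1] := by
            rw [Matrix.mul_fin_two]
            norm_num [e01]
          rw [hMT, hT, step, ← Matrix.mul_assoc]
        · -- recurse on !![g, 0; d, d]
          have hrec : Int.gcd g d < n := by
            have h1 : Int.gcd g d ∣ G := by
              have h : (Int.gcd g d : ℤ) ∣ g := Int.gcd_dvd_left _ _
              rwa [hgdef, Int.natCast_dvd_natCast] at h
            have h2 : Int.gcd g d ≠ G := fun hc =>
              hd (by rw [hgdef, ← hc]; exact Int.gcd_dvd_right _ _)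
            have := Nat.le_of_dvd (Nat.pos_of_ne_zero hG0) h1
            omega
          obtain ⟨e', f', a', b', ha', hab', hfac⟩ := ih !![g, 0; d, d] (by simpa using hrec)
          refine ⟨e₁⁻¹ * e', f' * ⟨!![1, 0; -1, 1], by simp [Matrix.det_fin_two_of]⟩ *
            ⟨!![1, b / g; 0, 1], by simp [Matrix.det_fin_two_of]⟩, a', b', ha', hab', ?_⟩
          have step : !![g, b; 0, d] =
              !![g, 0; d, d] * !![1, 0; -1, 1] * !![1, b / g; 0, 1] := by
            rw [Matrix.mul_fin_two, Matrix.mul_fin_two]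
            norm_num [e01]
          rw [hMT, hT, step, hfac]
          simp only [Matrix.SpecialLinearGroup.coe_mul, Matrix.mul_assoc]
          erw [Matrix.SpecialLinearGroup.coe_mul, Matrix.SpecialLinearGroup.coe_mul]
          simp only [Matrix.mul_assoc]
      · -- g does not divide b : reduce b mod g, then swap columns, recurse
        set r := b % g with hrdef
        have hr0 : r ≠ 0 := fun hc => hb (Int.dvd_of_emod_eq_zero (hrdef ▸ hc))
        have hrlt : r.natAbs < G := by
          have h1 : 0 ≤ r := Int.emod_nonneg b (ne_of_gt hgpos)
          have h2 : r < g := Int.emod_lt_of_pos b hgpos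
          omega
        obtain ⟨e', f', a', b', ha', hab', hfac⟩ := ih !![r, -g; d, 0] (by
          have h1 : Int.gcd r d ∣ r.natAbs := Nat.gcd_dvd_left _ _
          have h2 := Nat.le_of_dvd (by omega : 0 < r.natAbs) h1
          show Int.gcd r d < n
          omega)
        set k := b / g with hkdef
        have hbgk : g * k + r = b := Int.mul_ediv_add_emod b g
        refine ⟨e₁⁻¹ * e', f' * ⟨!![0, 1; -1, 0], by simp [Matrix.det_fin_two_of]⟩ *
          ⟨!![1, k; 0, 1], by simp [Matrix.det_fin_two_of]⟩, a', b', ha', hab', ?_⟩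
        have step : !![g, b; 0, d] = !![r, -g; d, 0] * !![0, 1; -1, 0] * !![1, k; 0, 1] := by
          rw [Matrix.mul_fin_two, Matrix.mul_fin_two]
          norm_num [hbgk]
        rw [hMT, hT, step, hfac]
        simp only [Matrix.SpecialLinearGroup.coe_mul, Matrix.mul_assoc]
        erw [Matrix.SpecialLinearGroup.coe_mul, Matrix.SpecialLinearGroup.coe_mul]
        simp only [Matrix.mul_assoc]

/-- content of an integer 2×2 matrix -/
def cont (M : Matrix (Fin 2) (Fin 2) ℤ) : ℕ :=
  Nat.gcd (Int.gcd (M 0 0) (M 0 1)) (Int.gcd (M 1 0) (M 1 1))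

lemma cont_dvd (M : Matrix (Fin 2) (Fin 2) ℤ) (i j : Fin 2) : (cont M : ℤ) ∣ M i j := by
  have h1 : (cont M : ℤ) ∣ (Int.gcd (M 0 0) (M 0 1) : ℤ) :=
    Int.natCast_dvd_natCast.mpr (Nat.gcd_dvd_left _ _)
  have h2 : (cont M : ℤ) ∣ (Int.gcd (M 1 0) (M 1 1) : ℤ) :=
    Int.natCast_dvd_natCast.mpr (Nat.gcd_dvd_right _ _)
  fin_cases i <;> fin_cases j
  · exact h1.trans (Int.gcd_dvd_left _ _)
  · exact h1.trans (Int.gcd_dvd_right _ _)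
  · exact h2.trans (Int.gcd_dvd_left _ _)
  · exact h2.trans (Int.gcd_dvd_right _ _)

lemma dvd_cont {d : ℤ} (M : Matrix (Fin 2) (Fin 2) ℤ) (h : ∀ i j, d ∣ M i j) :
    d ∣ (cont M : ℤ) := by
  have : d ∣ (Int.gcd (Int.gcd (M 0 0) (M 0 1) : ℤ) (Int.gcd (M 1 0) (M 1 1) : ℤ) : ℤ) :=
    Int.dvd_coe_gcd (Int.dvd_coe_gcd (h 0 0) (h 0 1)) (Int.dvd_coe_gcd (h 1 0) (h 1 1))
  simpa [Int.gcd, cont, Int.natAbs_natCast] using this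

lemma cont_dvd_cont_mul_left (A M : Matrix (Fin 2) (Fin 2) ℤ) :
    (cont M : ℤ) ∣ (cont (A * M) : ℤ) := by
  refine dvd_cont _ fun i j => ?_
  rw [Matrix.mul_apply, Fin.sum_univ_two]
  exact dvd_add (Dvd.dvd.mul_left (cont_dvd M 0 j) _) (Dvd.dvd.mul_left (cont_dvd M 1 j) _)

lemma cont_dvd_cont_mul_right (A M : Matrix (Fin 2) (Fin 2) ℤ) :
    (cont M : ℤ) ∣ (cont (M * A) : ℤ) := by
  refine dvd_cont _ fun i j => ?_
  rw [Matrix.mul_apply, Fin.sum_univ_two]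
  exact dvd_add (Dvd.dvd.mul_right (cont_dvd M i 0) _) (Dvd.dvd.mul_right (cont_dvd M i 1) _)

lemma cont_mul_left (A : SL2) (M : Matrix (Fin 2) (Fin 2) ℤ) : cont (A.1 * M) = cont M := by
  have h1 := cont_dvd_cont_mul_left A.1 M
  have h2 := cont_dvd_cont_mul_left (A⁻¹).1 (A.1 * M)
  rw [← Matrix.mul_assoc, ← Matrix.SpecialLinearGroup.coe_mul, inv_mul_cancel,
    Matrix.SpecialLinearGroup.coe_one, Matrix.one_mul] at h2
  exact Nat.dvd_antisymm (Int.natCast_dvd_natCast.mp h2) (Int.natCast_dvd_natCast.mp h1)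

lemma cont_mul_right (A : SL2) (M : Matrix (Fin 2) (Fin 2) ℤ) : cont (M * A.1) = cont M := by
  have h1 := cont_dvd_cont_mul_right A.1 M
  have h2 := cont_dvd_cont_mul_right (A⁻¹).1 (M * A.1)
  rw [Matrix.mul_assoc, ← Matrix.SpecialLinearGroup.coe_mul, mul_inv_cancel,
    Matrix.SpecialLinearGroup.coe_one, Matrix.mul_one] at h2
  exact Nat.dvd_antisymm (Int.natCast_dvd_natCast.mp h2) (Int.natCast_dvd_natCast.mp h1)

lemma cont_sq (q : ℤ) : cont !![1, 0; 0, q] = 1 := by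
  simp [cont]

lemma cont_intsmul (n : ℤ) (M : Matrix (Fin 2) (Fin 2) ℤ) :
    cont (n • M) = n.natAbs * cont M := by
  have : ∀ i j : Fin 2, (n • M) i j = n * M i j := fun i j => rfl
  simp only [cont, this, Int.gcd_mul_left, Nat.gcd_mul_left]

lemma den_mul_self (q : ℚ) : (q.den : ℚ) * q = (q.num : ℚ) :=
  Rat.den_mul_eq_num q

lemma mapmul (A B : Matrix (Fin 2) (Fin 2) ℤ) :
    ((A * B).map (Int.cast : ℤ → ℚ)) = A.map Int.cast * B.map Int.cast := by
  ext i j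
  simp [Matrix.map_apply, Matrix.mul_apply, Fin.sum_univ_two]

lemma mapdet (A : Matrix (Fin 2) (Fin 2) ℤ) :
    (A.map (Int.cast : ℤ → ℚ)).det = (A.det : ℚ) := by
  have := (RingHom.map_det (Int.castRingHom ℚ) A).symm
  rwa [Int.coe_castRingHom] at this

/-- The rational matrix image of an integer matrix in `SL(2,ℤ)`. -/
noncomputable def toQ (e : Matrix.SpecialLinearGroup (Fin 2) ℤ) :
    Matrix (Fin 2) (Fin 2) ℚ :=
  (e : Matrix (Fin 2) (Fin 2) ℤ).map (Int.cast)

lemma sqmap (q : ℤ) : ((!![1, 0; 0, q] : Matrix (Fin 2) (Fin 2) ℤ).map (Int.cast : ℤ → ℚ))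
    = !![(1 : ℚ), 0; 0, (q : ℚ)] := by
  ext i j
  fin_cases i <;> fin_cases j <;> simp [Matrix.map_apply]

/-- every representation produces a primitive integer matrix with determinant `q` -/
lemma rep (g : Matrix (Fin 2) (Fin 2) ℚ) (r : ℚ) (q : ℤ) (E F : SL2)
    (h : g = r • (toQ E * !![(1 : ℚ), 0; 0, (q : ℚ)] * toQ F)) :
    ∃ P : Matrix (Fin 2) (Fin 2) ℤ, cont P = 1 ∧ P.det = q ∧
      g = r • (P.map (Int.cast : ℤ → ℚ)) := by
  refine ⟨E.1 * !![1, 0; 0, q] * F.1, ?_, ?_, ?_⟩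
  · rw [Matrix.mul_assoc, cont_mul_left E]
    rw [cont_mul_right F]
    exact cont_sq q
  · rw [Matrix.det_mul, Matrix.det_mul, E.2, F.2]
    simp [Matrix.det_fin_two_of]
  · rw [h, mapmul, mapmul, sqmap]
    rfl

/-- Smith normal form over `ℚ` relative to `SL(2,ℤ)`: every nonzero
`g ∈ M(2,ℚ)` factors as `g = r • (e * s_q * f)` with `r ∈ ℚ`, `r > 0`,
`e, f ∈ SL(2,ℤ)`, `q ∈ ℤ` and `s_q = [[1,0],[0,q]]`; moreover `r` and `q`
are uniquely determined by `g`. -/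
theorem stmt5 (g : Matrix (Fin 2) (Fin 2) ℚ) (hg : g ≠ 0) :
    ∃ (r : ℚ) (q : ℤ),
      (0 < r ∧ ∃ e f : Matrix.SpecialLinearGroup (Fin 2) ℤ,
        g = r • (toQ e * !![(1 : ℚ), 0; 0, (q : ℚ)] * toQ f)) ∧
      ∀ (r' : ℚ) (q' : ℤ),
        (0 < r' ∧ ∃ e f : Matrix.SpecialLinearGroup (Fin 2) ℤ,
          g = r' • (toQ e * !![(1 : ℚ), 0; 0, (q' : ℚ)] * toQ f)) →
        r' = r ∧ q' = q := by
  classical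
  set d0 : ℕ := (g 0 0).den with hd0
  set d1 : ℕ := (g 0 1).den with hd1
  set d2 : ℕ := (g 1 0).den with hd2
  set d3 : ℕ := (g 1 1).den with hd3
  set M : Matrix (Fin 2) (Fin 2) ℤ :=
    !![(g 0 0).num * ((d1 * d2 * d3 : ℕ) : ℤ), (g 0 1).num * ((d0 * d2 * d3 : ℕ) : ℤ);
       (g 1 0).num * ((d0 * d1 * d3 : ℕ) : ℤ), (g 1 1).num * ((d0 * d1 * d2 : ℕ) : ℤ)] with hMdef
  set n : ℚ := ((d0 * d1 * d2 * d3 : ℕ) : ℚ) with hndef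
  have hn0 : (0 : ℚ) < n := by
    rw [hndef]
    have := (g 0 0).pos
    have := (g 0 1).pos
    have := (g 1 0).pos
    have := (g 1 1).pos
    positivity
  have hcast : ∀ i j, ((M i j : ℤ) : ℚ) = n * g i j := by
    intro i j
    fin_cases i <;> fin_cases j <;>
      simp only [hMdef, hndef, Matrix.cons_val', Matrix.cons_val_zero, Matrix.cons_val_one,
        Matrix.head_cons, Matrix.head_fin_const, Matrix.empty_val', Matrix.cons_val_fin_one,
        Matrix.of_apply, Fin.mk_zero, Fin.mk_one] <;> push_cast
    · linear_combination (-((d1 : ℚ) * d2 * d3)) * den_mul_self (g 0 0)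
    · linear_combination (-((d0 : ℚ) * d2 * d3)) * den_mul_self (g 0 1)
    · linear_combination (-((d0 : ℚ) * d1 * d3)) * den_mul_self (g 1 0)
    · linear_combination (-((d0 : ℚ) * d1 * d2)) * den_mul_self (g 1 1)
  have hg' : g = n⁻¹ • (M.map (Int.cast : ℤ → ℚ)) := by
    ext i j
    rw [Matrix.smul_apply, Matrix.map_apply, hcast i j, smul_eq_mul, ← mul_assoc,
      inv_mul_cancel₀ hn0.ne', one_mul]
  obtain ⟨e, f, a, b, ha, hab, hfac⟩ :=
    snf_aux (Int.gcd (M 0 0) (M 1 0) + 1) M (Nat.lt_succ_self _)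
  have ha0 : 0 < a := by
    rcases lt_or_eq_of_le ha with h | h
    · exact h
    · exfalso
      apply hg
      have hb0 : b = 0 := zero_dvd_iff.mp (h ▸ hab)
      have hM0 : M = 0 := by
        rw [hfac, ← h, hb0]
        have : !![(0 : ℤ), 0; 0, 0] = 0 := by ext i j; fin_cases i <;> fin_cases j <;> simp
        rw [this, Matrix.mul_zero, Matrix.zero_mul]
      rw [hg', hM0]
      ext i j
      simp [Matrix.map_apply]
  obtain ⟨q, hq⟩ := hab
  set r : ℚ := (a : ℚ) / n with hrdef
  have hr : 0 < r := div_pos (by exact_mod_cast ha0) hn0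
  have hDmap : (!![a, 0; 0, b] : Matrix (Fin 2) (Fin 2) ℤ).map (Int.cast : ℤ → ℚ)
      = (a : ℚ) • !![(1 : ℚ), 0; 0, (q : ℚ)] := by
    ext i j
    fin_cases i <;> fin_cases j <;>
      simp [Matrix.map_apply, hq]
  have hex : g = r • (toQ e * !![(1 : ℚ), 0; 0, (q : ℚ)] * toQ f) := by
    rw [hg', hfac, mapmul, mapmul, hDmap]
    show _ = r • (toQ e * _ * toQ f)
    rw [Matrix.mul_smul, Matrix.smul_mul, smul_smul, hrdef, div_eq_inv_mul]
    rfl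
  refine ⟨r, q, ⟨hr, e, f, hex⟩, ?_⟩
  -- uniqueness
  rintro r' q' ⟨hr', e', f', hex'⟩
  obtain ⟨P, hPc, hPd, hPg⟩ := rep g r q e f hex
  obtain ⟨P', hPc', hPd', hPg'⟩ := rep g r' q' e' f' hex'
  have hentry : ∀ i j, r * ((P i j : ℤ) : ℚ) = r' * ((P' i j : ℤ) : ℚ) := by
    intro i j
    have h1 := congrFun (congrFun (hPg ▸ hPg') i) j
    simpa [Matrix.smul_apply, Matrix.map_apply, smul_eq_mul] using h1
  have hkey : ∀ i j, (r.num * (r'.den : ℤ)) * P i j = (r'.num * (r.den : ℤ)) * P' i j := by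
    intro i j
    have h1 := den_mul_self r
    have h2 := den_mul_self r'
    have h3 := hentry i j
    have : (((r.num * (r'.den : ℤ)) * P i j : ℤ) : ℚ)
        = (((r'.num * (r.den : ℤ)) * P' i j : ℤ) : ℚ) := by
      push_cast
      linear_combination (-(((r'.den : ℚ)) * (P i j : ℤ))) * h1
        + (((r.den : ℚ)) * ((P' i j : ℤ) : ℚ)) * h2
        + (((r.den : ℚ)) * ((r'.den : ℚ))) * h3
    exact_mod_cast this
  have hsmul : (r.num * (r'.den : ℤ)) • P = (r'.num * (r.den : ℤ)) • P' := by
    ext i j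
    simpa [Matrix.smul_apply, smul_eq_mul] using hkey i j
  have hcont := congrArg cont hsmul
  rw [cont_intsmul, cont_intsmul, hPc, hPc', mul_one, mul_one] at hcont
  have hnum : r.num * (r'.den : ℤ) = r'.num * (r.den : ℤ) := by
    have p1 : 0 ≤ r.num * (r'.den : ℤ) :=
      mul_nonneg (Rat.num_pos.mpr hr).le (Int.natCast_nonneg _)
    have p2 : 0 ≤ r'.num * (r.den : ℤ) :=
      mul_nonneg (Rat.num_pos.mpr hr').le (Int.natCast_nonneg _)
    omega
  have hrr : r' = r := by
    rw [← Rat.num_div_den r, ← Rat.num_div_den r']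
    rw [div_eq_div_iff (by exact_mod_cast r'.pos.ne') (by exact_mod_cast r.pos.ne')]
    exact_mod_cast hnum.symm
  refine ⟨hrr, ?_⟩
  -- determinant comparison
  have hdet1 : g.det = r ^ 2 * (q : ℚ) := by
    rw [hPg, Matrix.det_smul, mapdet, hPd]
    norm_num
  have hdet2 : g.det = r' ^ 2 * (q' : ℚ) := by
    rw [hPg', Matrix.det_smul, mapdet, hPd']
    norm_num
  have : (q' : ℚ) = (q : ℚ) := by
    rw [hdet1, hrr] at hdet2
    have hr2 : r ^ 2 ≠ 0 := pow_ne_zero _ hr.ne'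
    exact (mul_left_cancel₀ hr2 hdet2).symm
  exact_mod_cast this
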